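/- If X̄ is the mean of N i.i.d. copies of a random variable X with mean μ and variance b, then E[X̄²] = μ² + b/N. Consequently, for independent coordinates, the variance of the product-of-means estimator equals ∏_j(a_j + b_j/N) − ∏_j a_j = ∑_{∅≠S} N^{−|S|}(∏_{j∈S} b_j)(∏_{j∉S} a_j), where a_j = μ_j². -/

import Mathlib

open MeasureTheory ProbabilityTheory Finset

lemma integral_pi_prod' {ι : Type*} [Fintype ι] {α : ι → Type*} [mα : ∀ i, MeasurableSpace (α i)]
    (μ : ∀ i, Measure (α i)) [∀ i, SigmaFinite (μ i)] (f : ∀ i, α i → ℝ) :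
    ∫ x : ∀ i, α i, ∏ i, f i (x i) ∂Measure.pi μ = ∏ i, ∫ x, f i x ∂μ i := by
  letI : ∀ i, MeasureSpace (α i) := fun i => ⟨μ i⟩
  haveI : ∀ i, SigmaFinite (volume : Measure (α i)) := ‹∀ i, SigmaFinite (μ i)›
  exact MeasureTheory.integral_fintype_prod_eq_prod f

lemma integrable_pi_prod' {ι : Type*} [Fintype ι] {α : ι → Type*} [mα : ∀ i, MeasurableSpace (α i)]
    (μ : ∀ i, Measure (α i)) [∀ i, SigmaFinite (μ i)] {f : ∀ i, α i → ℝ}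
    (hf : ∀ i, Integrable (f i) (μ i)) :
    Integrable (fun x : ∀ i, α i => ∏ i, f i (x i)) (Measure.pi μ) := by
  letI : ∀ i, MeasureSpace (α i) := fun i => ⟨μ i⟩
  haveI : ∀ i, SigmaFinite (volume : Measure (α i)) := ‹∀ i, SigmaFinite (μ i)›
  exact MeasureTheory.Integrable.fintype_prod_dep hf

lemma coord_mul (N : ℕ) (ρ : Measure ℝ) [IsProbabilityMeasure ρ] (hρ : MemLp id 2 ρ)
    (k l : Fin N) :
    Integrable (fun y : Fin N → ℝ => y k * y l) (Measure.pi fun _ => ρ) ∧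
    ∫ y : Fin N → ℝ, y k * y l ∂(Measure.pi fun _ => ρ)
      = if k = l then ∫ x, x ^ 2 ∂ρ else (∫ x, x ∂ρ) ^ 2 := by
  classical
  have h1 : Integrable (fun x : ℝ => x) ρ := hρ.integrable one_le_two
  have h2 : Integrable (fun x : ℝ => x ^ 2) ρ :=
    (memLp_two_iff_integrable_sq measurable_id.aestronglyMeasurable).1 hρ
  set F : Fin N → ℝ → ℝ := fun i x => (if i = k then x else 1) * (if i = l then x else 1) with hF
  have heq : ∀ y : Fin N → ℝ, (∏ i, F i (y i)) = y k * y l := by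
    intro y
    simp only [hF, Finset.prod_mul_distrib]
    rw [Finset.prod_ite_eq' univ k (fun i => y i), Finset.prod_ite_eq' univ l (fun i => y i)]
    simp
  have hint : ∀ i, Integrable (F i) ρ := by
    intro i
    rcases eq_or_ne i k with hik | hik <;> rcases eq_or_ne i l with hil | hil
    · subst hik; subst hil
      simp only [hF, if_pos rfl]
      simpa [sq] using h2
    · subst hik; simp only [hF, if_pos rfl, if_neg hil, mul_one]; exact h1
    · subst hil; simp only [hF, if_pos rfl, if_neg hik, one_mul]; exact h1
    · simp only [hF, if_neg hik, if_neg hil, mul_one]; exact integrable_const 1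
  constructor
  · have := integrable_pi_prod' (fun _ : Fin N => ρ) hint
    exact this.congr (Filter.Eventually.of_forall fun y => heq y)
  · rw [show (fun y : Fin N → ℝ => y k * y l) = fun y => ∏ i, F i (y i) by
      funext y; rw [heq]]
    rw [integral_pi_prod' (fun _ : Fin N => ρ) F]
    by_cases hkl : k = l
    · subst hkl
      have : ∀ i, ∫ x, F i x ∂ρ = if i = k then ∫ x, x ^ 2 ∂ρ else 1 := by
        intro i
        by_cases hik : i = k <;> simp [hF, hik, sq]
      rw [Finset.prod_congr rfl fun i _ => this i, Finset.prod_ite_eq' univ k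
        (fun _ => ∫ x, x ^ 2 ∂ρ)]
      simp
    · have : ∀ i, ∫ x, F i x ∂ρ
          = (if i = k then ∫ x, x ∂ρ else 1) * (if i = l then ∫ x, x ∂ρ else 1) := by
        intro i
        by_cases hik : i = k <;> by_cases hil : i = l <;> simp_all [hF]
      rw [Finset.prod_congr rfl fun i _ => this i, Finset.prod_mul_distrib,
        Finset.prod_ite_eq' univ k (fun _ => ∫ x, x ∂ρ),
        Finset.prod_ite_eq' univ l (fun _ => ∫ x, x ∂ρ)]
      simp [hkl, sq]

lemma coord_one (N : ℕ) (ρ : Measure ℝ) [IsProbabilityMeasure ρ] (hρ : MemLp id 2 ρ)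
    (k : Fin N) :
    Integrable (fun y : Fin N → ℝ => y k) (Measure.pi fun _ => ρ) ∧
    ∫ y : Fin N → ℝ, y k ∂(Measure.pi fun _ => ρ) = ∫ x, x ∂ρ := by
  classical
  have h1 : Integrable (fun x : ℝ => x) ρ := hρ.integrable one_le_two
  set F : Fin N → ℝ → ℝ := fun i x => if i = k then x else 1 with hF
  have heq : ∀ y : Fin N → ℝ, (∏ i, F i (y i)) = y k := by
    intro y
    rw [hF, Finset.prod_ite_eq' univ k (fun i => y i)]
    simp
  have hint : ∀ i, Integrable (F i) ρ := by
    intro i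
    rcases eq_or_ne i k with hik | hik
    · subst hik; simpa [hF] using h1
    · simp only [hF, if_neg hik]; exact integrable_const 1
  constructor
  · exact (integrable_pi_prod' (fun _ : Fin N => ρ) hint).congr
      (Filter.Eventually.of_forall fun y => heq y)
  · rw [show (fun y : Fin N → ℝ => y k) = fun y => ∏ i, F i (y i) by funext y; rw [heq]]
    rw [integral_pi_prod' (fun _ : Fin N => ρ) F]
    have : ∀ i, ∫ x, F i x ∂ρ = if i = k then ∫ x, x ∂ρ else 1 := by
      intro i
      rcases eq_or_ne i k with hik | hik <;> simp [hF, hik]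
    rw [Finset.prod_congr rfl fun i _ => this i,
      Finset.prod_ite_eq' univ k (fun _ => ∫ x, x ∂ρ)]
    simp

lemma avg_stuff (N : ℕ) (hN : 1 ≤ N) (ρ : Measure ℝ) [IsProbabilityMeasure ρ]
    (hρ : MemLp id 2 ρ) :
    Integrable (fun y : Fin N → ℝ => (∑ k, y k) / N) (Measure.pi fun _ => ρ) ∧
    Integrable (fun y : Fin N → ℝ => ((∑ k, y k) / N) ^ 2) (Measure.pi fun _ => ρ) ∧
    (∫ y : Fin N → ℝ, (∑ k, y k) / N ∂(Measure.pi fun _ => ρ)) = ∫ x, x ∂ρ ∧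
    (∫ y : Fin N → ℝ, ((∑ k, y k) / N) ^ 2 ∂(Measure.pi fun _ => ρ))
      = (∫ x, x ∂ρ) ^ 2 + variance id ρ / N := by
  have hN' : (N : ℝ) ≠ 0 := Nat.cast_ne_zero.2 (Nat.one_le_iff_ne_zero.1 hN)
  set μ1 := ∫ x, x ∂ρ with hμ1
  set m2 := ∫ x, x ^ 2 ∂ρ with hm2
  have hvar : variance id ρ = m2 - μ1 ^ 2 := by
    rw [variance_eq_sub hρ]
    simp [hμ1, hm2]
  have hsum_int : Integrable (fun y : Fin N → ℝ => ∑ k, y k) (Measure.pi fun _ => ρ) :=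
    integrable_finset_sum _ fun k _ => (coord_one N ρ hρ k).1
  have h1 : Integrable (fun y : Fin N → ℝ => (∑ k, y k) / N) (Measure.pi fun _ => ρ) :=
    hsum_int.div_const N
  have hsq_eq : (fun y : Fin N → ℝ => ((∑ k, y k) / N) ^ 2)
      = fun y => (∑ k, ∑ l, y k * y l) / (N : ℝ) ^ 2 := by
    funext y
    rw [div_pow, sq, Finset.sum_mul_sum]
  have h2 : Integrable (fun y : Fin N → ℝ => ((∑ k, y k) / N) ^ 2) (Measure.pi fun _ => ρ) := by
    rw [hsq_eq]
    exact (integrable_finset_sum _ fun k _ =>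
      integrable_finset_sum _ fun l _ => (coord_mul N ρ hρ k l).1).div_const _
  refine ⟨h1, h2, ?_, ?_⟩
  · rw [integral_div, integral_finset_sum _ fun k _ => (coord_one N ρ hρ k).1]
    simp only [fun k : Fin N => (coord_one N ρ hρ k).2, ← hμ1]
    rw [Finset.sum_const, card_univ, Fintype.card_fin, nsmul_eq_mul]
    field_simp
  · rw [hsq_eq, integral_div,
      integral_finset_sum _ fun k _ => integrable_finset_sum _ fun l _ => (coord_mul N ρ hρ k l).1]
    have : ∀ k : Fin N, (∫ y : Fin N → ℝ, ∑ l, y k * y l ∂(Measure.pi fun _ => ρ))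
        = (N : ℝ) * μ1 ^ 2 + (m2 - μ1 ^ 2) := by
      intro k
      rw [integral_finset_sum _ fun l _ => (coord_mul N ρ hρ k l).1]
      have hterm : ∀ l : Fin N, (∫ y : Fin N → ℝ, y k * y l ∂(Measure.pi fun _ => ρ))
          = μ1 ^ 2 + (if k = l then m2 - μ1 ^ 2 else 0) := by
        intro l
        rw [(coord_mul N ρ hρ k l).2]
        split_ifs <;> ring
      rw [Finset.sum_congr rfl fun l _ => hterm l, Finset.sum_add_distrib,
        Finset.sum_const, Finset.sum_ite_eq univ k (fun _ => m2 - μ1 ^ 2)]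
      simp [card_univ, mul_comm]
    rw [Finset.sum_congr rfl fun k _ => this k, Finset.sum_const, card_univ, Fintype.card_fin,
      hvar]
    field_simp
    ring

theorem stmt7 (N : ℕ) (hN : 1 ≤ N)
    (ν0 : Measure ℝ) [IsProbabilityMeasure ν0] (h0 : MemLp id 2 ν0)
    (m : ℕ) (ν : Fin m → Measure ℝ) [∀ j, IsProbabilityMeasure (ν j)]
    (h : ∀ j, MemLp id 2 (ν j)) :
    (∫ ω : Fin N → ℝ, ((∑ k, ω k) / N) ^ 2 ∂(Measure.pi fun _ : Fin N => ν0)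
        = (∫ x, x ∂ν0) ^ 2 + variance id ν0 / N) ∧
    variance (fun ω : Fin m → Fin N → ℝ => ∏ j, (∑ k, ω j k) / N)
        (Measure.pi fun j => Measure.pi fun _ : Fin N => ν j)
      = ∏ j, ((∫ x, x ∂ν j) ^ 2 + variance id (ν j) / N)
        - ∏ j, (∫ x, x ∂ν j) ^ 2 ∧
    variance (fun ω : Fin m → Fin N → ℝ => ∏ j, (∑ k, ω j k) / N)
        (Measure.pi fun j => Measure.pi fun _ : Fin N => ν j)
      = ∑ S ∈ (Finset.univ : Finset (Fin m)).powerset.erase ∅,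
          ((N : ℝ) ^ S.card)⁻¹ *
            ((∏ j ∈ S, variance id (ν j)) * ∏ j ∈ Sᶜ, (∫ x, x ∂ν j) ^ 2) := by
  classical
  set a : Fin m → ℝ := fun j => (∫ x, x ∂ν j) ^ 2 with ha
  set b : Fin m → ℝ := fun j => variance id (ν j) with hb
  set π : Fin m → Measure (Fin N → ℝ) := (fun j => Measure.pi fun _ : Fin N => ν j) with hπ
  set P : (Fin m → Fin N → ℝ) → ℝ := fun ω => ∏ j, (∑ k, ω j k) / N with hP
  have hfint : ∀ j, Integrable (fun y : Fin N → ℝ => (∑ k, y k) / N) (π j) :=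
    fun j => (avg_stuff N hN (ν j) (h j)).1
  have hgint : ∀ j, Integrable (fun y : Fin N → ℝ => ((∑ k, y k) / N) ^ 2) (π j) :=
    fun j => (avg_stuff N hN (ν j) (h j)).2.1
  have hPmeas : AEStronglyMeasurable P (Measure.pi π) := by
    apply Measurable.aestronglyMeasurable
    apply Finset.measurable_prod
    intro j _
    fun_prop
  have hP2eq : (fun ω : Fin m → Fin N → ℝ => P ω ^ 2)
      = fun ω : Fin m → Fin N → ℝ => ∏ j, ((∑ k, ω j k) / (N : ℝ)) ^ 2 := by
    funext ω
    rw [hP, ← Finset.prod_pow]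
  have hP2int : Integrable (fun ω => P ω ^ 2) (Measure.pi π) := by
    rw [hP2eq]
    exact integrable_pi_prod' π hgint
  have hMem : MemLp P 2 (Measure.pi π) := (memLp_two_iff_integrable_sq hPmeas).2 hP2int
  have hEP : ∫ ω, P ω ∂(Measure.pi π) = ∏ j, ∫ x, x ∂ν j := by
    rw [hP]
    rw [integral_pi_prod' π (fun j y => (∑ k, y k) / N)]
    exact Finset.prod_congr rfl fun j _ => (avg_stuff N hN (ν j) (h j)).2.2.1
  have hEP2 : ∫ ω, P ω ^ 2 ∂(Measure.pi π) = ∏ j, (a j + b j / N) := by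
    rw [hP2eq]
    rw [integral_pi_prod' π (fun j y => ((∑ k, y k) / N) ^ 2)]
    exact Finset.prod_congr rfl fun j _ => (avg_stuff N hN (ν j) (h j)).2.2.2
  have key2 : variance P (Measure.pi π) = ∏ j, (a j + b j / N) - ∏ j, a j := by
    rw [variance_eq_sub hMem]
    have h1 : (Measure.pi π)[P ^ 2] = ∫ ω, P ω ^ 2 ∂(Measure.pi π) := by
      simp [Pi.pow_apply]
    rw [h1, hEP2, hEP, ← Finset.prod_pow]
  have halg : ∏ j, (a j + b j / N) - ∏ j, a j
      = ∑ S ∈ (Finset.univ : Finset (Fin m)).powerset.erase ∅,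
          ((N : ℝ) ^ S.card)⁻¹ * ((∏ j ∈ S, b j) * ∏ j ∈ Sᶜ, a j) := by
    have hprod : ∏ j, (a j + b j / N)
        = ∑ S ∈ (Finset.univ : Finset (Fin m)).powerset,
            (∏ j ∈ S, (b j / N)) * ∏ j ∈ univ \ S, a j := by
      rw [Finset.prod_congr rfl fun j _ => add_comm (a j) (b j / N), Finset.prod_add]
    have hterm : ∀ S : Finset (Fin m),
        (∏ j ∈ S, (b j / N)) * ∏ j ∈ univ \ S, a j
          = ((N : ℝ) ^ S.card)⁻¹ * ((∏ j ∈ S, b j) * ∏ j ∈ Sᶜ, a j) := by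
      intro S
      rw [← Finset.compl_eq_univ_sdiff]
      simp_rw [div_eq_mul_inv]
      rw [Finset.prod_mul_distrib, Finset.prod_const, ← inv_pow]
      ring
    rw [hprod, Finset.sum_congr rfl fun S _ => hterm S]
    rw [← Finset.add_sum_erase _ _ (Finset.empty_mem_powerset (univ : Finset (Fin m)))]
    simp [Finset.compl_empty]
  exact ⟨(avg_stuff N hN ν0 h0).2.2.2, key2, key2.trans halg⟩
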